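/- Let n ≥ 2 be an integer and let u : ℝⁿ → ℝ be a convex C² function with |∇u(x)| < 1 for all x ∈ ℝⁿ satisfying the translating soliton equation Δu(x) + D²u(x)(∇u(x), ∇u(x))/(1 − |∇u(x)|²) = 1 for all x ∈ ℝⁿ. Then u(ρy)/ρ → 1 as ρ → ∞, uniformly for y ranging over the intersection of the closure of the gradient image ∇u(ℝⁿ) = {∇u(x) : x ∈ ℝⁿ} with the unit sphere S^{n−1} = {y ∈ ℝⁿ : |y| = 1}. -/

import Mathlib

open Set Filter Topology

lemma support_ineq {F : Type*} [NormedAddCommGroup F] [InnerProductSpace ℝ F] [CompleteSpace F]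
    {u : F → ℝ} (hconv : ConvexOn ℝ Set.univ u) (hdiff : Differentiable ℝ u) (x y : F) :
    u x + inner ℝ (gradient u x) (y - x) ≤ u y := by
  have hF : HasFDerivAt u (InnerProductSpace.toDual ℝ F (gradient u x)) x :=
    hasGradientAt_iff_hasFDerivAt.1 (hdiff x).hasGradientAt
  set c : ℝ → F := fun t => x + t • (y - x) with hc
  have hc0 : c 0 = x := by simp [hc]
  have hcd : HasDerivAt c (y - x) 0 := by
    exact (((hasDerivAt_id (0:ℝ)).smul_const (y - x)).const_add x).congr_deriv (one_smul ℝ _)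
  have hg : HasDerivAt (u ∘ c) ((inner ℝ (gradient u x) (y - x) : ℝ)) 0 := by
    have hF' : HasFDerivAt u ((InnerProductSpace.toDual ℝ F) (gradient u x)) (c 0) := by
      rw [hc0]; exact hF
    have := hF'.comp_hasDerivAt (0:ℝ) hcd
    simpa [InnerProductSpace.toDual_apply_apply] using this
  have hconvc : ConvexOn ℝ Set.univ (u ∘ c) := by
    have := hconv.comp_affineMap
      (AffineMap.const ℝ ℝ x + (LinearMap.toSpanSingleton ℝ F (y - x)).toAffineMap)
    simpa [Function.comp, hc, Set.preimage_univ, Pi.add_def, Function.const_apply,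
      LinearMap.toSpanSingleton_apply] using this
  have := hconvc.le_slope_of_hasDerivAt (Set.mem_univ 0) (Set.mem_univ 1)
    (by norm_num) hg
  have hs : slope (u ∘ c) 0 1 = u y - u x := by
    simp [slope_def_field, hc]
  rw [hs] at this
  linarith

theorem stmt_17 (n : ℕ) (hn : 2 ≤ n) (u : EuclideanSpace ℝ (Fin n) → ℝ)
    (hconv : ConvexOn ℝ Set.univ u)
    (hC2 : ContDiff ℝ 2 u)
    (hsp : ∀ x, ‖gradient u x‖ < 1)
    (heq : ∀ x : EuclideanSpace ℝ (Fin n),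
      (∑ i : Fin n, iteratedFDeriv ℝ 2 u x
          ![EuclideanSpace.single i 1, EuclideanSpace.single i 1]) +
        iteratedFDeriv ℝ 2 u x ![gradient u x, gradient u x] /
          (1 - ‖gradient u x‖ ^ 2) = 1) :
    TendstoUniformlyOn (fun (ρ : ℝ) (y : EuclideanSpace ℝ (Fin n)) => u (ρ • y) / ρ)
      (fun _ => (1 : ℝ)) Filter.atTop
      (closure (Set.range (gradient u)) ∩ Metric.sphere (0 : EuclideanSpace ℝ (Fin n)) 1) := by
  have hdiff : Differentiable ℝ u := hC2.differentiable (by norm_num)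
  have hfb : ∀ x, ‖fderiv ℝ u x‖ ≤ 1 := by
    intro x
    have h : ‖gradient u x‖ = ‖fderiv ℝ u x‖ := by
      rw [gradient]; exact LinearIsometryEquiv.norm_map _ _
    rw [← h]; exact (hsp x).le
  have hlip : ∀ z : EuclideanSpace ℝ (Fin n), ‖u z - u 0‖ ≤ 1 * ‖z - 0‖ := fun z =>
    convex_univ.norm_image_sub_le_of_norm_fderiv_le (fun x _ => hdiff x)
      (fun x _ => hfb x) (Set.mem_univ 0) (Set.mem_univ z)
  set K := closure (Set.range (gradient u)) ∩
    Metric.sphere (0 : EuclideanSpace ℝ (Fin n)) 1 with hK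
  have hKcomp : IsCompact K := (isCompact_sphere 0 1).inter_left isClosed_closure
  clear heq hn
  rw [Metric.tendstoUniformlyOn_iff]
  intro ε hε
  obtain ⟨δ, hδ0, hδa, hδb⟩ : ∃ δ : ℝ, 0 < δ ∧ 5 * δ / 2 < ε ∧ δ < ε :=
    ⟨ε / 4, by positivity, by linarith, by linarith⟩
  obtain ⟨t, hts, htf, htc⟩ := hKcomp.finite_cover_balls hδ0
  have hex : ∀ y ∈ t, ∃ x, ‖gradient u x - y‖ < δ := by
    intro y hy
    have hy' : y ∈ closure (Set.range (gradient u)) := (hts hy).1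
    obtain ⟨b, ⟨x, rfl⟩, hb⟩ := Metric.mem_closure_iff.1 hy' δ hδ0
    exact ⟨x, by rwa [dist_comm, dist_eq_norm] at hb⟩
  choose! f hf using hex
  obtain ⟨M, hM⟩ := (htf.image (fun y => |u (f y)| + ‖f y‖)).bddAbove
  have hM' : ∀ y ∈ t, |u (f y)| + ‖f y‖ ≤ M := fun y hy =>
    hM (Set.mem_image_of_mem _ hy)
  obtain ⟨M', hMM', hM0⟩ : ∃ M' : ℝ, M ≤ M' ∧ 0 ≤ M' :=
    ⟨max M 0, le_max_left _ _, le_max_right _ _⟩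
  filter_upwards [eventually_ge_atTop (max (max (2 * M' / δ) (|u 0| / δ)) 1)] with ρ hρ
  intro y hyK
  have hρ1 : (1:ℝ) ≤ ρ := le_trans (le_max_right _ _) hρ
  have hρ0 : (0:ℝ) < ρ := lt_of_lt_of_le one_pos hρ1
  have hρM : 2 * M' / δ ≤ ρ := le_trans (le_trans (le_max_left _ _) (le_max_left _ _)) hρ
  have hρu : |u 0| / δ ≤ ρ := le_trans (le_trans (le_max_right _ _) (le_max_left _ _)) hρ
  have hy1 : ‖y‖ = 1 := by simpa using hyK.2
  -- upper bound
  have hup : u (ρ • y) ≤ u 0 + ρ := by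
    have h2 := hlip (ρ • y)
    have h1 : ‖ρ • y - (0 : EuclideanSpace ℝ (Fin n))‖ = ρ := by
      simp [norm_smul, hy1, abs_of_pos hρ0]
    rw [h1, Real.norm_eq_abs, one_mul] at h2
    linarith [(abs_le.1 h2).2]
  -- lower bound
  obtain ⟨z, hzt, hzy⟩ : ∃ z ∈ t, dist y z < δ := by simpa using htc hyK
  have hz1 : ‖z‖ = 1 := by simpa using (hts hzt).2
  set x := f z with hx
  set g := gradient u x with hg
  have hgz : ‖g - z‖ < δ := hf z hzt
  have hzy' : ‖z - y‖ < δ := by rwa [dist_comm, dist_eq_norm] at hzy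
  -- ⟪z, y⟫ ≥ 1 - δ
  have hzy2 : ‖z - y‖ ^ 2 ≤ 2 * δ := by
    have h2 : ‖z - y‖ ≤ 2 := by
      calc ‖z - y‖ ≤ ‖z‖ + ‖y‖ := norm_sub_le _ _
      _ = 2 := by rw [hz1, hy1]; norm_num
    calc ‖z - y‖ ^ 2 = ‖z - y‖ * ‖z - y‖ := sq ‖z - y‖
    _ ≤ 2 * δ := mul_le_mul h2 hzy'.le (norm_nonneg _) (by norm_num)
  have hinnzy : (1 : ℝ) - δ ≤ inner ℝ z y := by
    have := norm_sub_sq_real z y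
    rw [hz1, hy1] at this
    nlinarith
  have hinngz : |(inner ℝ (g - z) y : ℝ)| ≤ δ := by
    calc |(inner ℝ (g - z) y : ℝ)| ≤ ‖g - z‖ * ‖y‖ := abs_real_inner_le_norm _ _
    _ ≤ δ := by rw [hy1, mul_one]; exact hgz.le
  have hinng : (1 : ℝ) - 2 * δ ≤ inner ℝ g y := by
    have h3 : (inner ℝ g y : ℝ) = inner ℝ z y + inner ℝ (g - z) y := by
      rw [inner_sub_left]; ring
    have := abs_le.1 hinngz
    linarith [this.1]
  have hgx : (inner ℝ g x : ℝ) ≤ ‖x‖ := by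
    calc (inner ℝ g x : ℝ) ≤ ‖g‖ * ‖x‖ := real_inner_le_norm _ _
    _ ≤ 1 * ‖x‖ := mul_le_mul_of_nonneg_right (hsp x).le (norm_nonneg _)
    _ = ‖x‖ := one_mul _
  have hsupp := support_ineq hconv hdiff x (ρ • y)
  have hexp : (inner ℝ g (ρ • y - x) : ℝ) = ρ * inner ℝ g y - inner ℝ g x := by
    rw [inner_sub_right, real_inner_smul_right]
  rw [← hg, hexp] at hsupp
  have huxM : -M' ≤ u x - ‖x‖ := by
    have h5 : |u x| + ‖x‖ ≤ M' := le_trans (hM' z hzt) hMM'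
    linarith [neg_abs_le (u x)]
  have hMρ : M' ≤ ρ * δ / 2 := by
    rw [div_le_iff₀ hδ0] at hρM
    linarith
  have hlow : -M' + ρ * (1 - 2 * δ) ≤ u (ρ • y) := by nlinarith
  -- conclude
  have huδ : |u 0| ≤ ρ * δ := by
    rw [div_le_iff₀ hδ0] at hρu
    linarith
  rw [Real.dist_eq, abs_sub_lt_iff]
  have hp1 : ρ * (5 * δ / 2) < ρ * ε := mul_lt_mul_of_pos_left hδa hρ0
  have hp2 : ρ * δ < ρ * ε := mul_lt_mul_of_pos_left hδb hρ0
  constructor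
  · have h7 : 1 - ε < u (ρ • y) / ρ := by
      rw [lt_div_iff₀ hρ0]
      linarith only [hlow, hMρ, hp1]
    linarith
  · have h8 : u (ρ • y) / ρ < 1 + ε := by
      rw [div_lt_iff₀ hρ0]
      linarith only [hup, huδ, le_abs_self (u 0), hp2]
    linarith
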